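/- arXiv:1904.01049 — 2 statements merged into one kernel-verified Lean document; each statement's English description precedes it below -/
import Mathlib

section
/- For every ρ ∈ [−1, 1], the two-task GP posterior predictive variance at a primary-task test point satisfies σ_T²(ρ) ≥ ρ²·σ_T²(1) + (1 − ρ²)·σ_T²(0); that is, it is bounded below by the convex combination (with weights ρ² and 1 − ρ²) of the posterior variance obtained when the two tasks are perfectly correlated and the posterior variance obtained when they are uncorrelated. -/
open Matrix

/-- Symmetry of the quadratic pairing for a real symmetric matrix. -/
lemma mtAux_dot_symm {N : ℕ} (A : Matrix (Fin N) (Fin N) ℝ) (hA : A.IsHermitian)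
    (x y : Fin N → ℝ) : x ⬝ᵥ A *ᵥ y = y ⬝ᵥ A *ᵥ x := by
  have hAt : Aᵀ = A := by
    have := hA; rwa [IsHermitian, conjTranspose_eq_transpose_of_trivial] at this
  rw [dotProduct_mulVec, ← vecMul_transpose, hAt, dotProduct_comm]

/-- The variational lower bound: for a positive definite matrix `A`,
`c - kᵀA⁻¹k` is the minimum of `c - 2vᵀk + vᵀAv` over all `v`. -/
lemma mtAux_quad_form_lb {N : ℕ} (A : Matrix (Fin N) (Fin N) ℝ) (hA : A.PosDef)
    (k : Fin N → ℝ) (c : ℝ) (v : Fin N → ℝ) :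
    c - k ⬝ᵥ A⁻¹ *ᵥ k ≤ c - 2 * (v ⬝ᵥ k) + v ⬝ᵥ A *ᵥ v := by
  set m := A⁻¹ *ᵥ k with hm
  have hAm : A *ᵥ m = k := by
    rw [hm, mulVec_mulVec, Matrix.mul_nonsing_inv _ hA.det_pos.ne'.isUnit, one_mulVec]
  have h0 : 0 ≤ (v - m) ⬝ᵥ A *ᵥ (v - m) := by
    have := hA.posSemidef.dotProduct_mulVec_nonneg (v - m)
    simpa using this
  have e1 : v ⬝ᵥ A *ᵥ m = v ⬝ᵥ k := by rw [hAm]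
  have e2 : m ⬝ᵥ A *ᵥ v = v ⬝ᵥ k := by rw [mtAux_dot_symm A hA.isHermitian, hAm]
  have e3 : m ⬝ᵥ A *ᵥ m = k ⬝ᵥ m := by rw [hAm, dotProduct_comm]
  rw [sub_dotProduct, mulVec_sub, dotProduct_sub, dotProduct_sub] at h0
  rw [e1, e2, e3] at h0
  have : k ⬝ᵥ A⁻¹ *ᵥ k = k ⬝ᵥ m := rfl
  rw [this]
  linarith

/-- The masked training covariance matrix of the two-task ICM model is positive
semidefinite whenever `ρ² ≤ 1`. -/
lemma mtAux_maskK_posSemidef (nT nS : ℕ)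
    (κ : Matrix (Fin (nT + nS + 1)) (Fin (nT + nS + 1)) ℝ) (hκ : κ.PosSemidef)
    (r : ℝ) (hr : r ^ 2 ≤ 1) :
    (Matrix.of fun i j : Fin (nT + nS) =>
      (if ((i : ℕ) < nT ↔ (j : ℕ) < nT) then 1 else r) * κ i.castSucc j.castSucc).PosSemidef := by
  set κ' : Matrix (Fin (nT + nS)) (Fin (nT + nS)) ℝ :=
    κ.submatrix Fin.castSucc Fin.castSucc with hκ'
  have hκ'psd : κ'.PosSemidef := hκ.submatrix _
  have hκsym : ∀ a b, κ b a = κ a b := fun a b => by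
    have := congrFun (congrFun hκ.isHermitian a) b
    simpa [conjTranspose_apply] using this
  rw [posSemidef_iff_dotProduct_mulVec]
  constructor
  · ext i j
    simp only [conjTranspose_apply, of_apply, star_trivial]
    by_cases hi : (i : ℕ) < nT <;> by_cases hj : (j : ℕ) < nT <;>
      simp [hi, hj, hκsym]
  · intro x
    set s := Real.sqrt (1 - r ^ 2) with hs
    have hs2 : s ^ 2 = 1 - r ^ 2 := Real.sq_sqrt (by linarith)
    set y : Fin (nT + nS) → ℝ := fun i => (if (i : ℕ) < nT then 1 else r) * x i with hy
    set z : Fin (nT + nS) → ℝ := fun i => (if (i : ℕ) < nT then 0 else s) * x i with hz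
    have key : (star x) ⬝ᵥ (Matrix.of fun i j : Fin (nT + nS) =>
        (if ((i : ℕ) < nT ↔ (j : ℕ) < nT) then 1 else r) * κ i.castSucc j.castSucc) *ᵥ x
        = y ⬝ᵥ κ' *ᵥ y + z ⬝ᵥ κ' *ᵥ z := by
      simp only [star_trivial, dotProduct, mulVec, Finset.mul_sum, ← Finset.sum_add_distrib]
      refine Finset.sum_congr rfl fun i _ => ?_
      refine Finset.sum_congr rfl fun j _ => ?_
      simp only [of_apply, hy, hz, hκ', submatrix_apply]
      by_cases hi : (i : ℕ) < nT <;> by_cases hj : (j : ℕ) < nT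
      · rw [if_pos (by tauto), if_pos hi, if_pos hj, if_pos hi, if_pos hj]; ring
      · rw [if_neg (by tauto), if_pos hi, if_neg hj, if_pos hi, if_neg hj]; ring
      · rw [if_neg (by tauto), if_neg hi, if_pos hj, if_neg hi, if_pos hj]; ring
      · rw [if_pos (by tauto), if_neg hi, if_neg hj, if_neg hi, if_neg hj]
        linear_combination (-(x i * κ i.castSucc j.castSucc * x j)) * hs2
    have h1 := hκ'psd.dotProduct_mulVec_nonneg y
    have h2 := hκ'psd.dotProduct_mulVec_nonneg z
    simp only [star_trivial] at h1 h2
    rw [key]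
    exact add_nonneg h1 h2

/-- Two-task ICM GP posterior predictive variance at a primary-task test point.
Indices `0, …, nT-1` of `κ` are primary-task training points, indices
`nT, …, nT+nS-1` are secondary-task training points, and index `nT+nS` is the
(primary-task) test point.  The task covariance matrix is `B = [[1, ρ], [ρ, 1]]`,
so covariances between points of the same task are `κ i j` and between points of
different tasks are `ρ * κ i j`.  Observation-noise standard deviations are `η`. -/
noncomputable def mtPostVar (nT nS : ℕ)
    (κ : Matrix (Fin (nT + nS + 1)) (Fin (nT + nS + 1)) ℝ)
    (η : Fin (nT + nS) → ℝ) (ρ : ℝ) : ℝ :=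
  let Kρ : Matrix (Fin (nT + nS)) (Fin (nT + nS)) ℝ :=
    Matrix.of fun i j =>
      (if ((i : ℕ) < nT ↔ (j : ℕ) < nT) then 1 else ρ) * κ i.castSucc j.castSucc
  let kρ : Fin (nT + nS) → ℝ := fun i =>
    (if (i : ℕ) < nT then 1 else ρ) * κ (Fin.last (nT + nS)) i.castSucc
  κ (Fin.last (nT + nS)) (Fin.last (nT + nS)) -
    kρ ⬝ᵥ (Kρ + Matrix.diagonal fun i => η i ^ 2)⁻¹ *ᵥ kρ

/-- For every `ρ ∈ [−1, 1]`, the two-task GP posterior predictive variance at a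
primary-task test point satisfies
`σ_T²(ρ) ≥ ρ² ⬝ σ_T²(1) + (1 − ρ²) ⬝ σ_T²(0)`. -/
theorem mtPostVar_ge_convex_combination (nT nS : ℕ)
    (κ : Matrix (Fin (nT + nS + 1)) (Fin (nT + nS + 1)) ℝ)
    (hκ : κ.PosSemidef)
    (η : Fin (nT + nS) → ℝ) (hη : ∀ i, 0 < η i)
    (ρ : ℝ) (hρ : ρ ∈ Set.Icc (-1 : ℝ) 1) :
    mtPostVar nT nS κ η ρ ≥
      ρ ^ 2 * mtPostVar nT nS κ η 1 + (1 - ρ ^ 2) * mtPostVar nT nS κ η 0 := by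
  obtain ⟨hρ1, hρ2⟩ := hρ
  have hρsq : ρ ^ 2 ≤ 1 := by nlinarith
  by_cases hρ0 : ρ = 0
  · subst hρ0; norm_num
  set D := Matrix.diagonal (fun i : Fin (nT + nS) => η i ^ 2) with hD
  set K : ℝ → Matrix (Fin (nT + nS)) (Fin (nT + nS)) ℝ := fun r => Matrix.of fun i j =>
    (if ((i : ℕ) < nT ↔ (j : ℕ) < nT) then 1 else r) * κ i.castSucc j.castSucc with hK
  set kv : ℝ → (Fin (nT + nS) → ℝ) := fun r i =>
    (if (i : ℕ) < nT then 1 else r) * κ (Fin.last (nT + nS)) i.castSucc with hk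
  set c := κ (Fin.last (nT + nS)) (Fin.last (nT + nS)) with hc
  have hmt : ∀ r, mtPostVar nT nS κ η r = c - kv r ⬝ᵥ (K r + D)⁻¹ *ᵥ kv r := fun r => rfl
  have hDpd : D.PosDef := Matrix.PosDef.diagonal fun i => pow_pos (hη i) 2
  have hApd : ∀ r, r ^ 2 ≤ 1 → (K r + D).PosDef := fun r hr =>
    Matrix.PosDef.posSemidef_add (mtAux_maskK_posSemidef nT nS κ hκ r hr) hDpd
  have hA1 := hApd 1 (by norm_num)
  have hA0 := hApd 0 (by norm_num)
  have hAρ := hApd ρ hρsq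
  set w := (K ρ + D)⁻¹ *ᵥ kv ρ with hw
  have hAw : (K ρ + D) *ᵥ w = kv ρ := by
    rw [hw, mulVec_mulVec, Matrix.mul_nonsing_inv _ hAρ.det_pos.ne'.isUnit, one_mulVec]
  have hval : mtPostVar nT nS κ η ρ = c - 2 * (w ⬝ᵥ kv ρ) + w ⬝ᵥ (K ρ + D) *ᵥ w := by
    rw [hmt ρ, hAw, ← hw]
    rw [dotProduct_comm (kv ρ) w]
    ring
  set u : Fin (nT + nS) → ℝ := fun i => if (i : ℕ) < nT then ρ * w i else w i with hu
  set w0 : Fin (nT + nS) → ℝ := fun i => if (i : ℕ) < nT then w i else 0 with hw0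
  have h2' : ρ ^ 2 * ρ⁻¹ = ρ := by
    rw [pow_two, mul_assoc, mul_inv_cancel₀ hρ0, mul_one]
  have h3' : ρ ^ 2 * ρ⁻¹ ^ 2 = 1 := by
    rw [← mul_pow, mul_inv_cancel₀ hρ0, one_pow]
  have ha : w ⬝ᵥ kv ρ = ρ * (u ⬝ᵥ kv 1) + (1 - ρ ^ 2) * (w0 ⬝ᵥ kv 0) := by
    simp only [dotProduct, Finset.mul_sum, ← Finset.sum_add_distrib]
    refine Finset.sum_congr rfl fun i _ => ?_
    simp only [hu, hw0, hk]
    split_ifs <;> ring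
  have hb : w ⬝ᵥ (K ρ) *ᵥ w
      = u ⬝ᵥ (K 1) *ᵥ u + (1 - ρ ^ 2) * (w0 ⬝ᵥ (K 0) *ᵥ w0) := by
    simp only [dotProduct, mulVec, hK, Finset.mul_sum, ← Finset.sum_add_distrib]
    refine Finset.sum_congr rfl fun i _ => ?_
    refine Finset.sum_congr rfl fun j _ => ?_
    simp only [of_apply, hu, hw0]
    split_ifs <;> first | tauto | ring
  have hcD : w ⬝ᵥ D *ᵥ w = u ⬝ᵥ D *ᵥ u + (1 - ρ ^ 2) * (w0 ⬝ᵥ D *ᵥ w0) := by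
    simp only [dotProduct, hD, mulVec_diagonal, Finset.mul_sum, ← Finset.sum_add_distrib]
    refine Finset.sum_congr rfl fun i _ => ?_
    simp only [hu, hw0]
    split_ifs <;> ring
  have hF1 : ρ ^ 2 * (c - 2 * ((ρ⁻¹ • u) ⬝ᵥ kv 1) + (ρ⁻¹ • u) ⬝ᵥ (K 1 + D) *ᵥ (ρ⁻¹ • u))
      = ρ ^ 2 * c - 2 * ρ * (u ⬝ᵥ kv 1) + u ⬝ᵥ (K 1 + D) *ᵥ u := by
    rw [smul_dotProduct, mulVec_smul, dotProduct_smul, smul_dotProduct]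
    simp only [smul_eq_mul]
    linear_combination (-2 * (u ⬝ᵥ kv 1)) * h2' + (u ⬝ᵥ (K 1 + D) *ᵥ u) * h3'
  have hid : mtPostVar nT nS κ η ρ =
      ρ ^ 2 * (c - 2 * ((ρ⁻¹ • u) ⬝ᵥ kv 1) + (ρ⁻¹ • u) ⬝ᵥ (K 1 + D) *ᵥ (ρ⁻¹ • u))
      + (1 - ρ ^ 2) * (c - 2 * (w0 ⬝ᵥ kv 0) + w0 ⬝ᵥ (K 0 + D) *ᵥ w0) := by
    rw [hval, hF1]
    rw [add_mulVec, dotProduct_add, add_mulVec, dotProduct_add, add_mulVec, dotProduct_add,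
      ha, hb, hcD]
    ring
  have l1 := mtAux_quad_form_lb (K 1 + D) hA1 (kv 1) c (ρ⁻¹ • u)
  have l0 := mtAux_quad_form_lb (K 0 + D) hA0 (kv 0) c w0
  have h1' : ρ ^ 2 * (c - kv 1 ⬝ᵥ (K 1 + D)⁻¹ *ᵥ kv 1)
      ≤ ρ ^ 2 * (c - 2 * ((ρ⁻¹ • u) ⬝ᵥ kv 1) + (ρ⁻¹ • u) ⬝ᵥ (K 1 + D) *ᵥ (ρ⁻¹ • u)) :=
    mul_le_mul_of_nonneg_left l1 (sq_nonneg ρ)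
  have h0' : (1 - ρ ^ 2) * (c - kv 0 ⬝ᵥ (K 0 + D)⁻¹ *ᵥ kv 0)
      ≤ (1 - ρ ^ 2) * (c - 2 * (w0 ⬝ᵥ kv 0) + w0 ⬝ᵥ (K 0 + D) *ᵥ w0) :=
    mul_le_mul_of_nonneg_left l0 (by linarith)
  rw [ge_iff_le, hmt 1, hmt 0, hid]
  linarith
end

section
/- Let ε_κ(n) denote the single-task GP learning curve and ε_T(ρ, n_T, n_S) the two-task GP learning curve for task correlation ρ ∈ [−1, 1], n_T primary-task training points, and n_S secondary-task training points, where all training and test points are drawn i.i.d. from the probability measure μ. Then ε_T(ρ, n_T, n_S) ≥ ρ²·ε_κ(n_T + n_S) + (1 − ρ²)·ε_κ(n_T). -/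
open Matrix MeasureTheory

/-- Single-task GP posterior predictive variance at test point `xs`, given `n`
training points `x` drawn from index set `E`, for kernel `k` and noise
variance `η2`. -/
noncomputable def stVar {E : Type*} (k : E → E → ℝ) (η2 : ℝ) (n : ℕ)
    (x : Fin n → E) (xs : E) : ℝ :=
  k xs xs - (fun i => k xs (x i)) ⬝ᵥ
    ((Matrix.of fun i j => k (x i) (x j)) +
      η2 • (1 : Matrix (Fin n) (Fin n) ℝ))⁻¹ *ᵥ
    (fun i => k xs (x i))

/-- Two-task (ICM, task correlation `ρ`) GP posterior predictive variance at a
primary-task test point `xs`.  Training points `x i` with `(i : ℕ) < nT` belong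
to the primary task and the remaining `nS` points belong to the secondary
task. -/
noncomputable def mtVar {E : Type*} (k : E → E → ℝ) (η2 : ℝ) (nT nS : ℕ) (ρ : ℝ)
    (x : Fin (nT + nS) → E) (xs : E) : ℝ :=
  k xs xs - (fun i : Fin (nT + nS) => (if (i : ℕ) < nT then 1 else ρ) * k xs (x i)) ⬝ᵥ
    ((Matrix.of fun i j : Fin (nT + nS) =>
        (if ((i : ℕ) < nT ↔ (j : ℕ) < nT) then 1 else ρ) * k (x i) (x j)) +
      η2 • (1 : Matrix (Fin (nT + nS)) (Fin (nT + nS)) ℝ))⁻¹ *ᵥ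
    (fun i : Fin (nT + nS) => (if (i : ℕ) < nT then 1 else ρ) * k xs (x i))

/-- Single-task learning curve `ε_κ(n)`: expected posterior predictive variance
where the `n` training points and the test point are drawn i.i.d. from `μ`. -/
noncomputable def stLearningCurve {E : Type*} [MeasurableSpace E] (μ : Measure E)
    (k : E → E → ℝ) (η2 : ℝ) (n : ℕ) : ℝ :=
  ∫ x : Fin (n + 1) → E,
    stVar k η2 n (fun i => x i.castSucc) (x (Fin.last n)) ∂(Measure.pi fun _ => μ)

/-- Multi-task learning curve `ε_T(ρ, nT, nS)`: expected two-task posterior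
predictive variance at a primary-task test point, where the `nT` primary-task
training points, the `nS` secondary-task training points, and the test point
are drawn i.i.d. from `μ`. -/
noncomputable def mtLearningCurve {E : Type*} [MeasurableSpace E] (μ : Measure E)
    (k : E → E → ℝ) (η2 : ℝ) (ρ : ℝ) (nT nS : ℕ) : ℝ :=
  ∫ x : Fin (nT + nS + 1) → E,
    mtVar k η2 nT nS ρ (fun i => x i.castSucc) (x (Fin.last (nT + nS)))
    ∂(Measure.pi fun _ => μ)


section LCAux

section Core

lemma symm_dot {m : ℕ} {M : Matrix (Fin m) (Fin m) ℝ} (hs : Mᵀ = M)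
    (u v : Fin m → ℝ) : u ⬝ᵥ M *ᵥ v = (M *ᵥ u) ⬝ᵥ v := by
  rw [Matrix.dotProduct_mulVec, ← Matrix.mulVec_transpose, hs]

lemma psd_dot {m : ℕ} {M : Matrix (Fin m) (Fin m) ℝ} (h : M.PosSemidef)
    (v : Fin m → ℝ) : 0 ≤ v ⬝ᵥ M *ᵥ v := by
  simpa using h.dotProduct_mulVec_nonneg v

lemma herm_symm {m : ℕ} {M : Matrix (Fin m) (Fin m) ℝ} (h : M.IsHermitian) : Mᵀ = M := by
  have := h.eq; rwa [Matrix.conjTranspose_eq_transpose_of_trivial] at this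

lemma quad_lower {m : ℕ} {M : Matrix (Fin m) (Fin m) ℝ} (hM : M.PosDef)
    (kv : Fin m → ℝ) (c : ℝ) (a : Fin m → ℝ) :
    c - kv ⬝ᵥ M⁻¹ *ᵥ kv ≤ c - 2 * (a ⬝ᵥ kv) + a ⬝ᵥ M *ᵥ a := by
  have hdet : IsUnit M.det := (Matrix.isUnit_iff_isUnit_det M).1 hM.isUnit
  have hs : Mᵀ = M := herm_symm hM.1
  set g := M⁻¹ *ᵥ kv with hg
  have hMg : M *ᵥ g = kv := by
    rw [hg, Matrix.mulVec_mulVec, Matrix.mul_nonsing_inv _ hdet, Matrix.one_mulVec]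
  have hexp : (a - g) ⬝ᵥ M *ᵥ (a - g)
      = a ⬝ᵥ M *ᵥ a - a ⬝ᵥ kv - kv ⬝ᵥ a + kv ⬝ᵥ g := by
    have h1 : a ⬝ᵥ M *ᵥ g = a ⬝ᵥ kv := by rw [hMg]
    have h2 : g ⬝ᵥ M *ᵥ a = kv ⬝ᵥ a := by rw [symm_dot hs, hMg]
    have h3 : g ⬝ᵥ M *ᵥ g = kv ⬝ᵥ g := by rw [symm_dot hs, hMg]
    rw [Matrix.mulVec_sub, dotProduct_sub, sub_dotProduct, sub_dotProduct, h1, h2, h3]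
    ring
  have hpos : 0 ≤ (a - g) ⬝ᵥ M *ᵥ (a - g) := psd_dot hM.posSemidef _
  have hcomm : a ⬝ᵥ kv = kv ⬝ᵥ a := dotProduct_comm _ _
  rw [hexp] at hpos
  have : kv ⬝ᵥ g = kv ⬝ᵥ M⁻¹ *ᵥ kv := rfl
  linarith

lemma quad_attained {m : ℕ} {M : Matrix (Fin m) (Fin m) ℝ} (hM : M.PosDef)
    (kv : Fin m → ℝ) (c : ℝ) :
    c - kv ⬝ᵥ M⁻¹ *ᵥ kv
      = c - 2 * ((M⁻¹ *ᵥ kv) ⬝ᵥ kv) + (M⁻¹ *ᵥ kv) ⬝ᵥ M *ᵥ (M⁻¹ *ᵥ kv) := by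
  have hdet : IsUnit M.det := (Matrix.isUnit_iff_isUnit_det M).1 hM.isUnit
  have hs : Mᵀ = M := herm_symm hM.1
  set g := M⁻¹ *ᵥ kv with hg
  have hMg : M *ᵥ g = kv := by
    rw [hg, Matrix.mulVec_mulVec, Matrix.mul_nonsing_inv _ hdet, Matrix.one_mulVec]
  have h3 : g ⬝ᵥ M *ᵥ g = kv ⬝ᵥ g := by rw [symm_dot hs, hMg]
  have hcomm : g ⬝ᵥ kv = kv ⬝ᵥ g := dotProduct_comm _ _
  rw [h3, hcomm]; ring

lemma sum_chi {nT nS : ℕ} (f : Fin (nT + nS) → ℝ) :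
    ∑ j : Fin nT, f (Fin.castAdd nS j)
      = ∑ i : Fin (nT + nS), (if (i : ℕ) < nT then (1:ℝ) else 0) * f i := by
  rw [Fin.sum_univ_add]
  simp [Fin.is_lt]

lemma SL1 {nT nS : ℕ} (ρ : ℝ) (g h : Fin (nT + nS) → ℝ) :
    ∑ i : Fin (nT + nS), ((if (i : ℕ) < nT then (1:ℝ) else ρ) * g i) *
        ((if (i : ℕ) < nT then (1:ℝ) else ρ) * h i)
      = ρ^2 * ∑ i : Fin (nT + nS), g i * h i
        + (1 - ρ^2) * ∑ i : Fin nT, g (Fin.castAdd nS i) * h (Fin.castAdd nS i) := by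
  rw [sum_chi (f := fun i => g i * h i), Finset.mul_sum, Finset.mul_sum,
    ← Finset.sum_add_distrib]
  apply Finset.sum_congr rfl
  intro i _
  by_cases hi : (i : ℕ) < nT <;> simp [hi] <;> ring

lemma SL2 {nT nS : ℕ} (ρ : ℝ) (K : Fin (nT + nS) → Fin (nT + nS) → ℝ)
    (g : Fin (nT + nS) → ℝ) :
    ∑ i : Fin (nT + nS), ((if (i : ℕ) < nT then (1:ℝ) else ρ) * g i) *
        ∑ j : Fin (nT + nS), ((if ((i : ℕ) < nT ↔ (j : ℕ) < nT) then (1:ℝ) else ρ) * K i j) *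
          ((if (j : ℕ) < nT then (1:ℝ) else ρ) * g j)
      = ρ^2 * ∑ i : Fin (nT + nS), g i * ∑ j : Fin (nT + nS), K i j * g j
        + (1 - ρ^2) * ∑ i : Fin nT, g (Fin.castAdd nS i) *
            ∑ j : Fin nT, K (Fin.castAdd nS i) (Fin.castAdd nS j) * g (Fin.castAdd nS j) := by
  rw [sum_chi (f := fun i => g i * ∑ j : Fin nT, K i (Fin.castAdd nS j) * g (Fin.castAdd nS j))]
  have hinner : ∀ i : Fin (nT + nS),
      ∑ j : Fin nT, K i (Fin.castAdd nS j) * g (Fin.castAdd nS j)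
        = ∑ j : Fin (nT + nS), (if (j : ℕ) < nT then (1:ℝ) else 0) * (K i j * g j) :=
    fun i => sum_chi (f := fun j => K i j * g j)
  simp only [hinner]
  rw [Finset.mul_sum, Finset.mul_sum, ← Finset.sum_add_distrib]
  apply Finset.sum_congr rfl
  intro i _
  simp only [Finset.mul_sum]
  rw [← Finset.sum_add_distrib]
  apply Finset.sum_congr rfl
  intro j _
  by_cases hi : (i : ℕ) < nT <;> by_cases hj : (j : ℕ) < nT <;> simp [hi, hj] <;> ring

lemma dot_aux {m : ℕ} (A : Matrix (Fin m) (Fin m) ℝ) (η2 : ℝ) (v : Fin m → ℝ) :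
    v ⬝ᵥ (A + η2 • (1 : Matrix (Fin m) (Fin m) ℝ)) *ᵥ v
      = v ⬝ᵥ A *ᵥ v + η2 * (v ⬝ᵥ v) := by
  rw [Matrix.add_mulVec, dotProduct_add, Matrix.smul_mulVec, Matrix.one_mulVec,
    dotProduct_smul, smul_eq_mul]

lemma keyIdentity (nT nS : ℕ) (ρ η2 c : ℝ) (K : Matrix (Fin (nT + nS)) (Fin (nT + nS)) ℝ)
    (κ w : Fin (nT + nS) → ℝ) :
    c - 2 * ((fun i : Fin (nT + nS) => (if (i : ℕ) < nT then (1:ℝ) else ρ) * w i) ⬝ᵥ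
          (fun i : Fin (nT + nS) => (if (i : ℕ) < nT then (1:ℝ) else ρ) * κ i))
      + (fun i : Fin (nT + nS) => (if (i : ℕ) < nT then (1:ℝ) else ρ) * w i) ⬝ᵥ
        ((Matrix.of fun i j : Fin (nT + nS) =>
            (if ((i : ℕ) < nT ↔ (j : ℕ) < nT) then (1:ℝ) else ρ) * K i j) +
          η2 • (1 : Matrix (Fin (nT + nS)) (Fin (nT + nS)) ℝ)) *ᵥ
        (fun i : Fin (nT + nS) => (if (i : ℕ) < nT then (1:ℝ) else ρ) * w i)
    = ρ^2 * (c - 2 * (w ⬝ᵥ κ) + w ⬝ᵥ (K + η2 • (1 : Matrix (Fin (nT + nS)) (Fin (nT + nS)) ℝ)) *ᵥ w)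
      + (1 - ρ^2) * (c - 2 * ((fun j : Fin nT => w (Fin.castAdd nS j)) ⬝ᵥ
            (fun j : Fin nT => κ (Fin.castAdd nS j)))
          + (fun j : Fin nT => w (Fin.castAdd nS j)) ⬝ᵥ
            ((Matrix.of fun i j : Fin nT => K (Fin.castAdd nS i) (Fin.castAdd nS j)) +
              η2 • (1 : Matrix (Fin nT) (Fin nT) ℝ)) *ᵥ
            (fun j : Fin nT => w (Fin.castAdd nS j))) := by
  rw [dot_aux, dot_aux, dot_aux]
  have h1 := SL1 (nS := nS) ρ w κ
  have h3 := SL1 (nS := nS) ρ w w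
  have h2 := SL2 (nS := nS) ρ (fun i j => K i j) w
  simp only [dotProduct, mulVec, Matrix.of_apply] at *
  rw [h1, h3, h2]
  ring

lemma zeroCase (nT nS : ℕ) (η2 c : ℝ) (hη2 : 0 ≤ η2)
    (K : Matrix (Fin (nT + nS)) (Fin (nT + nS)) ℝ) (hK : K.PosSemidef)
    (κ a : Fin (nT + nS) → ℝ) :
    c - 2 * ((fun j : Fin nT => a (Fin.castAdd nS j)) ⬝ᵥ
          (fun j : Fin nT => κ (Fin.castAdd nS j)))
      + (fun j : Fin nT => a (Fin.castAdd nS j)) ⬝ᵥ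
        ((Matrix.of fun i j : Fin nT => K (Fin.castAdd nS i) (Fin.castAdd nS j)) +
          η2 • (1 : Matrix (Fin nT) (Fin nT) ℝ)) *ᵥ
        (fun j : Fin nT => a (Fin.castAdd nS j))
    ≤ c - 2 * (a ⬝ᵥ (fun i : Fin (nT + nS) => (if (i : ℕ) < nT then (1:ℝ) else 0) * κ i))
      + a ⬝ᵥ ((Matrix.of fun i j : Fin (nT + nS) =>
            (if ((i : ℕ) < nT ↔ (j : ℕ) < nT) then (1:ℝ) else 0) * K i j) +
          η2 • (1 : Matrix (Fin (nT + nS)) (Fin (nT + nS)) ℝ)) *ᵥ a := by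
  rw [dot_aux, dot_aux]
  have hlin : (fun j : Fin nT => a (Fin.castAdd nS j)) ⬝ᵥ (fun j : Fin nT => κ (Fin.castAdd nS j))
      = a ⬝ᵥ (fun i : Fin (nT + nS) => (if (i : ℕ) < nT then (1:ℝ) else 0) * κ i) := by
    simp only [dotProduct]
    rw [sum_chi (f := fun i => a i * κ i)]
    apply Finset.sum_congr rfl
    intro i _
    by_cases hi : (i : ℕ) < nT <;> simp [hi]
  have hquad : a ⬝ᵥ (Matrix.of fun i j : Fin (nT + nS) =>
        (if ((i : ℕ) < nT ↔ (j : ℕ) < nT) then (1:ℝ) else 0) * K i j) *ᵥ a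
      = (fun j : Fin nT => a (Fin.castAdd nS j)) ⬝ᵥ
          (Matrix.of fun i j : Fin nT => K (Fin.castAdd nS i) (Fin.castAdd nS j)) *ᵥ
          (fun j : Fin nT => a (Fin.castAdd nS j))
        + (fun i : Fin (nT + nS) => (if (i : ℕ) < nT then (0:ℝ) else 1) * a i) ⬝ᵥ
            K *ᵥ (fun i : Fin (nT + nS) => (if (i : ℕ) < nT then (0:ℝ) else 1) * a i) := by
    simp only [dotProduct, mulVec, Matrix.of_apply]
    rw [sum_chi (f := fun i => a i * ∑ j : Fin nT, K i (Fin.castAdd nS j) * a (Fin.castAdd nS j))]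
    have hinner : ∀ i : Fin (nT + nS),
        ∑ j : Fin nT, K i (Fin.castAdd nS j) * a (Fin.castAdd nS j)
          = ∑ j : Fin (nT + nS), (if (j : ℕ) < nT then (1:ℝ) else 0) * (K i j * a j) :=
      fun i => sum_chi (f := fun j => K i j * a j)
    simp only [hinner, Finset.mul_sum]
    rw [← Finset.sum_add_distrib]
    apply Finset.sum_congr rfl
    intro i _
    rw [← Finset.sum_add_distrib]
    apply Finset.sum_congr rfl
    intro j _
    by_cases hi : (i : ℕ) < nT <;> by_cases hj : (j : ℕ) < nT <;> simp [hi, hj] <;> ring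
  have hpsd : 0 ≤ (fun i : Fin (nT + nS) => (if (i : ℕ) < nT then (0:ℝ) else 1) * a i) ⬝ᵥ
      K *ᵥ (fun i : Fin (nT + nS) => (if (i : ℕ) < nT then (0:ℝ) else 1) * a i) :=
    psd_dot hK _
  have hnorm : (fun j : Fin nT => a (Fin.castAdd nS j)) ⬝ᵥ (fun j : Fin nT => a (Fin.castAdd nS j))
      ≤ a ⬝ᵥ a := by
    simp only [dotProduct]
    rw [Fin.sum_univ_add (f := fun i : Fin (nT + nS) => a i * a i)]
    have : 0 ≤ ∑ i : Fin nS, a (Fin.natAdd nT i) * a (Fin.natAdd nT i) :=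
      Finset.sum_nonneg fun i _ => mul_self_nonneg _
    linarith
  have := mul_le_mul_of_nonneg_left hnorm hη2
  rw [hlin, hquad]
  linarith

lemma noiseD {m : ℕ} {η2 : ℝ} (hη2 : 0 < η2) :
    (η2 • (1 : Matrix (Fin m) (Fin m) ℝ)).PosDef := by
  rw [Matrix.smul_one_eq_diagonal]
  exact Matrix.PosDef.diagonal fun _ => hη2

lemma M_posDef {m : ℕ} {K : Matrix (Fin m) (Fin m) ℝ} (hK : K.PosSemidef) {η2 : ℝ}
    (hη2 : 0 < η2) : (K + η2 • (1 : Matrix (Fin m) (Fin m) ℝ)).PosDef :=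
  Matrix.PosDef.posSemidef_add hK (noiseD hη2)

lemma Kρ_psd {nT nS : ℕ} (ρ : ℝ) (hρ : ρ^2 ≤ 1)
    {K : Matrix (Fin (nT + nS)) (Fin (nT + nS)) ℝ} (hK : K.PosSemidef) :
    (Matrix.of fun i j : Fin (nT + nS) =>
      (if ((i : ℕ) < nT ↔ (j : ℕ) < nT) then (1:ℝ) else ρ) * K i j).PosSemidef := by
  have hKsymm : ∀ i j, K j i = K i j := fun i j => congrFun (congrFun (herm_symm hK.1) i) j
  refine Matrix.PosSemidef.of_dotProduct_mulVec_nonneg ?_ ?_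
  · show _ = _
    ext i j
    simp only [Matrix.conjTranspose_apply, Matrix.of_apply, star_trivial]
    rw [hKsymm]
    by_cases hi : (i : ℕ) < nT <;> by_cases hj : (j : ℕ) < nT <;> simp [hi, hj]
  · intro v
    have hv : star v = v := by funext i; simp
    rw [hv]
    have hdec : v ⬝ᵥ (Matrix.of fun i j : Fin (nT + nS) =>
          (if ((i : ℕ) < nT ↔ (j : ℕ) < nT) then (1:ℝ) else ρ) * K i j) *ᵥ v
        = (fun i : Fin (nT + nS) => (if (i : ℕ) < nT then (1:ℝ) else ρ) * v i) ⬝ᵥ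
            K *ᵥ (fun i : Fin (nT + nS) => (if (i : ℕ) < nT then (1:ℝ) else ρ) * v i)
          + (1 - ρ^2) * ((fun i : Fin (nT + nS) => (if (i : ℕ) < nT then (0:ℝ) else 1) * v i) ⬝ᵥ
            K *ᵥ (fun i : Fin (nT + nS) => (if (i : ℕ) < nT then (0:ℝ) else 1) * v i)) := by
      simp only [dotProduct, mulVec, Matrix.of_apply, Finset.mul_sum]
      rw [← Finset.sum_add_distrib]
      apply Finset.sum_congr rfl
      intro i _
      rw [← Finset.sum_add_distrib]
      apply Finset.sum_congr rfl
      intro j _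
      by_cases hi : (i : ℕ) < nT <;> by_cases hj : (j : ℕ) < nT <;>
        simp only [hi, hj, iff_true, iff_false, true_iff, false_iff, not_true, not_false_eq_true,
          if_true, if_false, ite_true, ite_false, not_false_iff] <;> ring
    rw [hdec]
    have h1 := psd_dot hK (fun i : Fin (nT + nS) => (if (i : ℕ) < nT then (1:ℝ) else ρ) * v i)
    have h2 := psd_dot hK (fun i : Fin (nT + nS) => (if (i : ℕ) < nT then (0:ℝ) else 1) * v i)
    have := mul_nonneg (by linarith : (0:ℝ) ≤ 1 - ρ^2) h2
    exact add_nonneg h1 this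

lemma abstract_main {nT nS : ℕ} {η2 : ℝ} (hη2 : 0 < η2) {ρ : ℝ} (hρ : ρ^2 ≤ 1)
    (K : Matrix (Fin (nT + nS)) (Fin (nT + nS)) ℝ) (hK : K.PosSemidef)
    (hKT : (Matrix.of fun i j : Fin nT => K (Fin.castAdd nS i) (Fin.castAdd nS j)).PosSemidef)
    (κ : Fin (nT + nS) → ℝ) (c : ℝ) :
    ρ^2 * (c - κ ⬝ᵥ (K + η2 • (1 : Matrix (Fin (nT + nS)) (Fin (nT + nS)) ℝ))⁻¹ *ᵥ κ)
      + (1 - ρ^2) * (c - (fun j : Fin nT => κ (Fin.castAdd nS j)) ⬝ᵥ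
          ((Matrix.of fun i j : Fin nT => K (Fin.castAdd nS i) (Fin.castAdd nS j)) +
            η2 • (1 : Matrix (Fin nT) (Fin nT) ℝ))⁻¹ *ᵥ (fun j : Fin nT => κ (Fin.castAdd nS j)))
    ≤ c - (fun i : Fin (nT + nS) => (if (i : ℕ) < nT then (1:ℝ) else ρ) * κ i) ⬝ᵥ
        ((Matrix.of fun i j : Fin (nT + nS) =>
            (if ((i : ℕ) < nT ↔ (j : ℕ) < nT) then (1:ℝ) else ρ) * K i j) +
          η2 • (1 : Matrix (Fin (nT + nS)) (Fin (nT + nS)) ℝ))⁻¹ *ᵥ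
        (fun i : Fin (nT + nS) => (if (i : ℕ) < nT then (1:ℝ) else ρ) * κ i) := by
  have hMfull := M_posDef hK hη2
  have hMT := M_posDef hKT hη2
  have hMρ := M_posDef (Kρ_psd ρ hρ hK) hη2
  set κρ : Fin (nT + nS) → ℝ :=
    fun i => (if (i : ℕ) < nT then (1:ℝ) else ρ) * κ i with hκρ
  set Mρ := (Matrix.of fun i j : Fin (nT + nS) =>
      (if ((i : ℕ) < nT ↔ (j : ℕ) < nT) then (1:ℝ) else ρ) * K i j) +
      η2 • (1 : Matrix (Fin (nT + nS)) (Fin (nT + nS)) ℝ) with hMρdef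
  set a := Mρ⁻¹ *ᵥ κρ with ha
  have hattain : c - κρ ⬝ᵥ Mρ⁻¹ *ᵥ κρ = c - 2 * (a ⬝ᵥ κρ) + a ⬝ᵥ Mρ *ᵥ a :=
    quad_attained hMρ κρ c
  rw [hattain]
  by_cases hρ0 : ρ = 0
  · subst hρ0
    have hz := zeroCase nT nS η2 c hη2.le K hK κ a
    have hlow := quad_lower hMT (fun j : Fin nT => κ (Fin.castAdd nS j)) c
      (fun j : Fin nT => a (Fin.castAdd nS j))
    have hcomm : a ⬝ᵥ κρ = κρ ⬝ᵥ a := dotProduct_comm _ _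
    norm_num
    rw [← hκρ, ← hMρdef] at hz
    linarith [hz, hlow]
  · set w : Fin (nT + nS) → ℝ := fun i => if (i : ℕ) < nT then a i else a i / ρ with hw
    have hdw : (fun i : Fin (nT + nS) => (if (i : ℕ) < nT then (1:ℝ) else ρ) * w i) = a := by
      funext i
      by_cases hi : (i : ℕ) < nT
      · simp [hw, hi]
      · simp only [hw, hi, if_false]
        field_simp
    have hkey := keyIdentity nT nS ρ η2 c K κ w
    rw [hdw] at hkey
    have hda : a ⬝ᵥ κρ = (fun i : Fin (nT + nS) =>
        (if (i : ℕ) < nT then (1:ℝ) else ρ) * w i) ⬝ᵥ κρ := by rw [hdw]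
    have hlow1 := quad_lower hMfull κ c w
    have hlow2 := quad_lower hMT (fun j : Fin nT => κ (Fin.castAdd nS j)) c
      (fun j : Fin nT => w (Fin.castAdd nS j))
    have h1 := mul_le_mul_of_nonneg_left hlow1 (sq_nonneg ρ)
    have h2 := mul_le_mul_of_nonneg_left hlow2 (by linarith : (0:ℝ) ≤ 1 - ρ^2)
    calc ρ^2 * (c - κ ⬝ᵥ (K + η2 • (1 : Matrix (Fin (nT + nS)) (Fin (nT + nS)) ℝ))⁻¹ *ᵥ κ)
          + (1 - ρ^2) * (c - (fun j : Fin nT => κ (Fin.castAdd nS j)) ⬝ᵥ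
            ((Matrix.of fun i j : Fin nT => K (Fin.castAdd nS i) (Fin.castAdd nS j)) +
              η2 • (1 : Matrix (Fin nT) (Fin nT) ℝ))⁻¹ *ᵥ (fun j : Fin nT => κ (Fin.castAdd nS j)))
        ≤ ρ^2 * (c - 2 * (w ⬝ᵥ κ) + w ⬝ᵥ (K + η2 • (1 : Matrix (Fin (nT + nS)) (Fin (nT + nS)) ℝ)) *ᵥ w)
          + (1 - ρ^2) * (c - 2 * ((fun j : Fin nT => w (Fin.castAdd nS j)) ⬝ᵥ
              (fun j : Fin nT => κ (Fin.castAdd nS j)))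
            + (fun j : Fin nT => w (Fin.castAdd nS j)) ⬝ᵥ
              ((Matrix.of fun i j : Fin nT => K (Fin.castAdd nS i) (Fin.castAdd nS j)) +
                η2 • (1 : Matrix (Fin nT) (Fin nT) ℝ)) *ᵥ
              (fun j : Fin nT => w (Fin.castAdd nS j))) := add_le_add h1 h2
      _ = c - 2 * (a ⬝ᵥ κρ) + a ⬝ᵥ Mρ *ᵥ a := by
          rw [← hkey, hda, hdw]
  done

end Core

lemma var_le {m : ℕ} {K : Matrix (Fin m) (Fin m) ℝ} (hK : K.PosSemidef) {η2 : ℝ}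
    (hη2 : 0 < η2) (κ : Fin m → ℝ) (c : ℝ) :
    c - κ ⬝ᵥ (K + η2 • (1 : Matrix (Fin m) (Fin m) ℝ))⁻¹ *ᵥ κ ≤ c :=
  sub_le_self _ (psd_dot (M_posDef hK hη2).inv.posSemidef κ)

lemma dot_self_nonneg {m : ℕ} (v : Fin m → ℝ) : 0 ≤ v ⬝ᵥ v := by
  simpa [dotProduct] using Finset.sum_nonneg fun i (_ : i ∈ Finset.univ) => mul_self_nonneg (v i)

lemma var_nonneg {m : ℕ} {K : Matrix (Fin m) (Fin m) ℝ} (hK : K.PosSemidef) {η2 : ℝ}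
    (hη2 : 0 < η2) (κ : Fin m → ℝ) (c : ℝ)
    (hext : ∀ a : Fin m → ℝ, 0 ≤ c - 2 * (a ⬝ᵥ κ) + a ⬝ᵥ K *ᵥ a) :
    0 ≤ c - κ ⬝ᵥ (K + η2 • (1 : Matrix (Fin m) (Fin m) ℝ))⁻¹ *ᵥ κ := by
  rw [quad_attained (M_posDef hK hη2) κ c, dot_aux]
  have h1 := hext ((K + η2 • (1 : Matrix (Fin m) (Fin m) ℝ))⁻¹ *ᵥ κ)
  have h2 := mul_nonneg hη2.le
    (dot_self_nonneg ((K + η2 • (1 : Matrix (Fin m) (Fin m) ℝ))⁻¹ *ᵥ κ))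
  have h3 : ((K + η2 • (1 : Matrix (Fin m) (Fin m) ℝ))⁻¹ *ᵥ κ) ⬝ᵥ κ
      = κ ⬝ᵥ ((K + η2 • (1 : Matrix (Fin m) (Fin m) ℝ))⁻¹ *ᵥ κ) := dotProduct_comm _ _
  linarith

lemma gram_ext {E : Type*} (k : E → E → ℝ) (hk_symm : ∀ x y, k x y = k y x)
    (hk_psd : ∀ (m : ℕ) (x : Fin m → E),
      (Matrix.of fun i j => k (x i) (x j)).PosSemidef)
    (n : ℕ) (x : Fin n → E) (xs : E) (a : Fin n → ℝ) :
    0 ≤ k xs xs - 2 * (a ⬝ᵥ (fun i => k xs (x i)))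
      + a ⬝ᵥ (Matrix.of fun i j => k (x i) (x j)) *ᵥ a := by
  have h0 := psd_dot (hk_psd (n + 1) (Fin.cons xs x)) (Fin.cons 1 (fun i => -a i))
  have hsymm : ∀ i, k (x i) xs = k xs (x i) := fun i => hk_symm _ _
  simp only [dotProduct, mulVec, Matrix.of_apply, Fin.sum_univ_succ, Fin.cons_zero,
    Fin.cons_succ, hsymm, neg_mul, mul_neg, neg_neg, one_mul, mul_one, mul_add,
    Finset.sum_add_distrib, Finset.sum_neg_distrib] at h0 ⊢
  have hc : ∀ i, ∑ j : Fin n, k (x i) (x j) * a j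
      = ∑ j : Fin n, a j * k (x i) (x j) := fun i =>
    Finset.sum_congr rfl fun j _ => mul_comm _ _
  have hc2 : ∑ i : Fin n, k xs (x i) * a i = ∑ i : Fin n, a i * k xs (x i) :=
    Finset.sum_congr rfl fun j _ => mul_comm _ _
  linarith [h0]

section Meas

variable {X : Type*} [MeasurableSpace X]

lemma meas_det {n : ℕ} {A : X → Matrix (Fin n) (Fin n) ℝ}
    (hA : ∀ i j, Measurable fun x => A x i j) : Measurable fun x => (A x).det := by
  simp only [Matrix.det_apply]
  apply Finset.measurable_sum
  intro σ _
  apply Measurable.const_smul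
  exact Finset.measurable_prod _ fun i _ => hA _ _

lemma meas_updateRow {n : ℕ} {A : X → Matrix (Fin n) (Fin n) ℝ}
    (hA : ∀ i j, Measurable fun x => A x i j) (r : Fin n) (v : Fin n → ℝ) (i j : Fin n) :
    Measurable fun x => (A x).updateRow r v i j := by
  simp only [Matrix.updateRow_apply]
  by_cases h : i = r <;> simp [h] <;> exact hA _ _

lemma meas_inv_entry {n : ℕ} {A : X → Matrix (Fin n) (Fin n) ℝ}
    (hA : ∀ i j, Measurable fun x => A x i j) (i j : Fin n) :
    Measurable fun x => (A x)⁻¹ i j := by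
  have : (fun x => (A x)⁻¹ i j)
      = fun x => Ring.inverse (A x).det * (A x).adjugate i j := by
    funext x
    rw [Matrix.inv_def, Matrix.smul_apply, smul_eq_mul]
  rw [this]
  simp only [Ring.inverse_eq_inv', Matrix.adjugate_apply]
  exact ((meas_det hA).inv).mul (meas_det (meas_updateRow hA _ _))
end Meas

section Meas2
variable {E : Type*} [MeasurableSpace E] {X : Type*} [MeasurableSpace X]

lemma meas_stVar {k : E → E → ℝ} (hk : Measurable (Function.uncurry k)) (η2 : ℝ) (n : ℕ)
    (x : Fin n → X → E) (xs : X → E) (hx : ∀ i, Measurable (x i)) (hxs : Measurable xs) :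
    Measurable fun p => stVar k η2 n (fun i => x i p) (xs p) := by
  have hk2 : ∀ (f g : X → E), Measurable f → Measurable g →
      Measurable fun p => k (f p) (g p) := fun f g hf hg => hk.comp (hf.prodMk hg)
  have hA : ∀ i j : Fin n, Measurable fun p =>
      ((Matrix.of fun i j => k (x i p) (x j p)) +
        η2 • (1 : Matrix (Fin n) (Fin n) ℝ)) i j := by
    intro i j
    have : (fun p => ((Matrix.of fun i j => k (x i p) (x j p)) +
        η2 • (1 : Matrix (Fin n) (Fin n) ℝ)) i j)
        = fun p => k (x i p) (x j p) + (η2 • (1 : Matrix (Fin n) (Fin n) ℝ)) i j := rfl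
    rw [this]
    exact (hk2 _ _ (hx i) (hx j)).add_const _
  unfold stVar
  apply Measurable.sub (hk2 _ _ hxs hxs)
  simp only [dotProduct, mulVec]
  apply Finset.measurable_sum
  intro i _
  apply Measurable.mul (hk2 _ _ hxs (hx i))
  apply Finset.measurable_sum
  intro j _
  exact (meas_inv_entry hA i j).mul (hk2 _ _ hxs (hx j))

lemma meas_mtVar {k : E → E → ℝ} (hk : Measurable (Function.uncurry k)) (η2 : ℝ)
    (nT nS : ℕ) (ρ : ℝ)
    (x : Fin (nT + nS) → X → E) (xs : X → E) (hx : ∀ i, Measurable (x i))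
    (hxs : Measurable xs) :
    Measurable fun p => mtVar k η2 nT nS ρ (fun i => x i p) (xs p) := by
  have hk2 : ∀ (f g : X → E), Measurable f → Measurable g →
      Measurable fun p => k (f p) (g p) := fun f g hf hg => hk.comp (hf.prodMk hg)
  have hA : ∀ i j : Fin (nT + nS), Measurable fun p =>
      ((Matrix.of fun i j : Fin (nT + nS) =>
          (if ((i : ℕ) < nT ↔ (j : ℕ) < nT) then 1 else ρ) * k (x i p) (x j p)) +
        η2 • (1 : Matrix (Fin (nT + nS)) (Fin (nT + nS)) ℝ)) i j := by
    intro i j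
    have : (fun p => ((Matrix.of fun i j : Fin (nT + nS) =>
          (if ((i : ℕ) < nT ↔ (j : ℕ) < nT) then 1 else ρ) * k (x i p) (x j p)) +
        η2 • (1 : Matrix (Fin (nT + nS)) (Fin (nT + nS)) ℝ)) i j)
        = fun p => (if ((i : ℕ) < nT ↔ (j : ℕ) < nT) then 1 else ρ) * k (x i p) (x j p)
            + (η2 • (1 : Matrix (Fin (nT + nS)) (Fin (nT + nS)) ℝ)) i j := rfl
    rw [this]
    exact ((measurable_const.mul (hk2 _ _ (hx i) (hx j)))).add_const _
  unfold mtVar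
  apply Measurable.sub (hk2 _ _ hxs hxs)
  simp only [dotProduct, mulVec]
  apply Finset.measurable_sum
  intro i _
  apply Measurable.mul (measurable_const.mul (hk2 _ _ hxs (hx i)))
  apply Finset.measurable_sum
  intro j _
  exact (meas_inv_entry hA i j).mul (measurable_const.mul (hk2 _ _ hxs (hx j)))

end Meas2

lemma measurePreserving_comp_inj {ι κ : Type*} [Fintype ι] [Fintype κ]
    {E : Type*} [MeasurableSpace E] (μ : Measure E) [IsProbabilityMeasure μ]
    {f : ι → κ} (hf : Function.Injective f) :
    MeasurePreserving (fun x : κ → E => x ∘ f)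
      (Measure.pi fun _ => μ) (Measure.pi fun _ => μ) := by
  classical
  have hmeas : Measurable fun x : κ → E => x ∘ f :=
    measurable_pi_lambda _ fun i => measurable_pi_apply (f i)
  refine ⟨hmeas, ?_⟩
  refine (Measure.pi_eq fun s hs => ?_).symm
  set t : κ → Set E := fun j => if h : ∃ i, f i = j then s h.choose else Set.univ with ht
  have htmeas : ∀ j, MeasurableSet (t j) := by
    intro j
    show MeasurableSet (if h : ∃ i, f i = j then s h.choose else Set.univ)
    by_cases h : ∃ i, f i = j
    · rw [dif_pos h]; exact hs _
    · rw [dif_neg h]; exact MeasurableSet.univ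
  have hpre : (fun x : κ → E => x ∘ f) ⁻¹' Set.pi Set.univ s = Set.pi Set.univ t := by
    ext x
    simp only [Set.mem_preimage, Set.mem_pi, Set.mem_univ, true_imp_iff, Function.comp_apply]
    constructor
    · intro hx j
      show x j ∈ (if h : ∃ i, f i = j then s h.choose else Set.univ)
      by_cases h : ∃ i, f i = j
      · rw [dif_pos h]
        have := hx h.choose
        rwa [h.choose_spec] at this
      · rw [dif_neg h]; exact Set.mem_univ _
    · intro hx i
      have hex : ∃ i', f i' = f i := ⟨i, rfl⟩
      have h2 : x (f i) ∈ (if h : ∃ i', f i' = f i then s h.choose else Set.univ) := hx (f i)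
      rw [dif_pos hex] at h2
      have hci : hex.choose = i := hf hex.choose_spec
      rw [hci] at h2
      exact h2

  rw [Measure.map_apply hmeas (MeasurableSet.univ_pi hs), hpre, Measure.pi_pi]
  -- now ∏ j, μ (t j) = ∏ i, μ (s i)
  have h1 : ∏ j, μ (t j) = ∏ j ∈ Finset.image f Finset.univ, μ (t j) := by
    refine (Finset.prod_subset (Finset.subset_univ _) ?_).symm
    intro j _ hj
    have : ¬∃ i, f i = j := by simpa [Finset.mem_image] using hj
    show μ (if h : ∃ i, f i = j then s h.choose else Set.univ) = 1
    rw [dif_neg this, measure_univ]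
  have h2 : ∏ j ∈ Finset.image f Finset.univ, μ (t j) = ∏ i, μ (t (f i)) :=
    Finset.prod_image fun i _ i' _ h => hf h
  have h3 : ∀ i, μ (t (f i)) = μ (s i) := by
    intro i
    have hex : ∃ i', f i' = f i := ⟨i, rfl⟩
    show μ (if h : ∃ i', f i' = f i then s h.choose else Set.univ) = μ (s i)
    rw [dif_pos hex]
    congr 1
    exact congrArg s (hf hex.choose_spec)
  rw [h1, h2]
  exact Finset.prod_congr rfl fun i _ => h3 i

lemma mtVar_ge {E : Type*} (k : E → E → ℝ)
    (hk_psd : ∀ (m : ℕ) (x : Fin m → E),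
      (Matrix.of fun i j => k (x i) (x j)).PosSemidef)
    {η2 : ℝ} (hη2 : 0 < η2) {ρ : ℝ} (hρ : ρ^2 ≤ 1) (nT nS : ℕ)
    (x : Fin (nT + nS) → E) (xs : E) :
    ρ^2 * stVar k η2 (nT + nS) x xs
      + (1 - ρ^2) * stVar k η2 nT (fun i => x (Fin.castAdd nS i)) xs
    ≤ mtVar k η2 nT nS ρ x xs :=
  abstract_main hη2 hρ (Matrix.of fun i j => k (x i) (x j)) (hk_psd _ x)
    (hk_psd nT (fun i => x (Fin.castAdd nS i))) (fun i => k xs (x i)) (k xs xs)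

section Bounds
variable {E : Type*}

lemma stVar_nonneg (k : E → E → ℝ) (hk_symm : ∀ x y, k x y = k y x)
    (hk_psd : ∀ (m : ℕ) (x : Fin m → E),
      (Matrix.of fun i j => k (x i) (x j)).PosSemidef)
    {η2 : ℝ} (hη2 : 0 < η2) (n : ℕ) (x : Fin n → E) (xs : E) : 0 ≤ stVar k η2 n x xs :=
  var_nonneg (hk_psd n x) hη2 (fun i => k xs (x i)) (k xs xs)
    (gram_ext k hk_symm hk_psd n x xs)

lemma stVar_le (k : E → E → ℝ)
    (hk_psd : ∀ (m : ℕ) (x : Fin m → E),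
      (Matrix.of fun i j => k (x i) (x j)).PosSemidef)
    {η2 : ℝ} (hη2 : 0 < η2) (n : ℕ) (x : Fin n → E) (xs : E) : stVar k η2 n x xs ≤ k xs xs :=
  var_le (hk_psd n x) hη2 _ _

lemma mtVar_le (k : E → E → ℝ)
    (hk_psd : ∀ (m : ℕ) (x : Fin m → E),
      (Matrix.of fun i j => k (x i) (x j)).PosSemidef)
    {η2 : ℝ} (hη2 : 0 < η2) {ρ : ℝ} (hρ : ρ^2 ≤ 1) (nT nS : ℕ) (x : Fin (nT + nS) → E) (xs : E) :
    mtVar k η2 nT nS ρ x xs ≤ k xs xs :=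
  var_le (Kρ_psd ρ hρ (hk_psd _ x)) hη2 _ _

end Bounds

end LCAux

/-- Learning-curve bound: `ε_T(ρ, n_T, n_S) ≥ ρ² ε_κ(n_T + n_S) + (1 − ρ²) ε_κ(n_T)`,
for a measurable, symmetric, bounded, positive semidefinite kernel `k`, noise
variance `η2 > 0`, task correlation `ρ ∈ [−1, 1]`, and all points drawn i.i.d.
from the probability measure `μ`. -/
theorem mtLearningCurve_ge_convex_combination {E : Type*} [MeasurableSpace E]
    (μ : Measure E) [IsProbabilityMeasure μ]
    (k : E → E → ℝ) (hk_meas : Measurable (Function.uncurry k))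
    (hk_symm : ∀ x y, k x y = k y x)
    (hk_bdd : ∃ C, ∀ x y, |k x y| ≤ C)
    (hk_psd : ∀ (m : ℕ) (x : Fin m → E),
      (Matrix.of fun i j => k (x i) (x j)).PosSemidef)
    (η2 : ℝ) (hη2 : 0 < η2)
    (ρ : ℝ) (hρ : ρ ∈ Set.Icc (-1 : ℝ) 1)
    (nT nS : ℕ) :
    mtLearningCurve μ k η2 ρ nT nS ≥
      ρ ^ 2 * stLearningCurve μ k η2 (nT + nS) +
        (1 - ρ ^ 2) * stLearningCurve μ k η2 nT := by
  obtain ⟨C, hC⟩ := hk_bdd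
  have hρ2 : ρ^2 ≤ 1 := by
    obtain ⟨h1, h2⟩ := hρ
    nlinarith
  have hρ2n : (0:ℝ) ≤ ρ^2 := sq_nonneg ρ
  have hρ2n' : (0:ℝ) ≤ 1 - ρ^2 := by linarith
  -- E is nonempty
  have hE : Nonempty E := by
    by_contra h
    rw [not_nonempty_iff] at h
    have h1 : μ Set.univ = 1 := measure_univ
    rw [Set.univ_eq_empty_iff.mpr h, measure_empty] at h1
    exact one_ne_zero h1.symm
  have hC0 : 0 ≤ C := le_trans (abs_nonneg _) (hC hE.some hE.some)
  set N := nT + nS with hN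
  set π : Measure (Fin (N + 1) → E) := Measure.pi fun _ => μ with hπ
  -- the three integrands
  set mtfn : (Fin (N + 1) → E) → ℝ :=
    fun p => mtVar k η2 nT nS ρ (fun i => p i.castSucc) (p (Fin.last N)) with hmtfn
  set ffn : (Fin (N + 1) → E) → ℝ :=
    fun p => stVar k η2 N (fun i => p i.castSucc) (p (Fin.last N)) with hffn
  set tfn : (Fin (N + 1) → E) → ℝ :=
    fun p => stVar k η2 nT (fun i => p (Fin.castSucc (Fin.castAdd nS i))) (p (Fin.last N))
    with htfn
  have hmeas_mt : Measurable mtfn :=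
    meas_mtVar (X := Fin (N + 1) → E) hk_meas η2 nT nS ρ (fun i p => p i.castSucc) (fun p => p (Fin.last N))
      (fun i => measurable_pi_apply _) (measurable_pi_apply _)
  have hmeas_f : Measurable ffn :=
    meas_stVar (X := Fin (N + 1) → E) hk_meas η2 N (fun i p => p i.castSucc) (fun p => p (Fin.last N))
      (fun i => measurable_pi_apply _) (measurable_pi_apply _)
  have hmeas_t : Measurable tfn :=
    meas_stVar (X := Fin (N + 1) → E) hk_meas η2 nT (fun i p => p (Fin.castSucc (Fin.castAdd nS i)))
      (fun p => p (Fin.last N)) (fun i => measurable_pi_apply _) (measurable_pi_apply _)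
  -- bounds
  have hb_f : ∀ p, |ffn p| ≤ C := by
    intro p
    rw [abs_le]
    constructor
    · linarith [stVar_nonneg k hk_symm hk_psd hη2 N (fun i => p i.castSucc) (p (Fin.last N))]
    · exact le_trans (stVar_le k hk_psd hη2 N _ _)
        (le_trans (le_abs_self _) (hC _ _))
  have hb_t : ∀ p, |tfn p| ≤ C := by
    intro p
    rw [abs_le]
    constructor
    · linarith [stVar_nonneg k hk_symm hk_psd hη2 nT
        (fun i => p (Fin.castSucc (Fin.castAdd nS i))) (p (Fin.last N))]
    · exact le_trans (stVar_le k hk_psd hη2 nT _ _)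
        (le_trans (le_abs_self _) (hC _ _))
  -- pointwise inequality
  have hpt : ∀ p, ρ^2 * ffn p + (1 - ρ^2) * tfn p ≤ mtfn p := fun p =>
    mtVar_ge k hk_psd hη2 hρ2 nT nS (fun i => p i.castSucc) (p (Fin.last N))
  have hb_mt : ∀ p, |mtfn p| ≤ C := by
    intro p
    rw [abs_le]
    constructor
    · have h1 := stVar_nonneg k hk_symm hk_psd hη2 N (fun i => p i.castSucc) (p (Fin.last N))
      have h2 := stVar_nonneg k hk_symm hk_psd hη2 nT
        (fun i => p (Fin.castSucc (Fin.castAdd nS i))) (p (Fin.last N))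
      have := hpt p
      have h3 : (0:ℝ) ≤ ρ^2 * ffn p := mul_nonneg hρ2n h1
      have h4 : (0:ℝ) ≤ (1 - ρ^2) * tfn p := mul_nonneg hρ2n' h2
      simp only [hmtfn]
      linarith
    · exact le_trans (mtVar_le k hk_psd hη2 hρ2 nT nS _ _)
        (le_trans (le_abs_self _) (hC _ _))
  -- integrability
  have hint_f : Integrable ffn π :=
    ⟨hmeas_f.aestronglyMeasurable, HasFiniteIntegral.of_bounded (C := C)
      (ae_of_all _ fun p => by rw [Real.norm_eq_abs]; exact hb_f p)⟩
  have hint_t : Integrable tfn π :=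
    ⟨hmeas_t.aestronglyMeasurable, HasFiniteIntegral.of_bounded (C := C)
      (ae_of_all _ fun p => by rw [Real.norm_eq_abs]; exact hb_t p)⟩
  have hint_mt : Integrable mtfn π :=
    ⟨hmeas_mt.aestronglyMeasurable, HasFiniteIntegral.of_bounded (C := C)
      (ae_of_all _ fun p => by rw [Real.norm_eq_abs]; exact hb_mt p)⟩
  -- integral inequality
  have hmono : ∫ p, (ρ^2 * ffn p + (1 - ρ^2) * tfn p) ∂π ≤ ∫ p, mtfn p ∂π :=
    integral_mono ((hint_f.const_mul _).add (hint_t.const_mul _)) hint_mt hpt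
  have hsplit : ∫ p, (ρ^2 * ffn p + (1 - ρ^2) * tfn p) ∂π
      = ρ^2 * ∫ p, ffn p ∂π + (1 - ρ^2) * ∫ p, tfn p ∂π := by
    rw [integral_add (hint_f.const_mul _) (hint_t.const_mul _),
      integral_const_mul, integral_const_mul]
  -- identify ∫ ffn with stLearningCurve (nT + nS)
  have hfull : ∫ p, ffn p ∂π = stLearningCurve μ k η2 (nT + nS) := rfl
  -- marginalization for the nT term
  have htT : ∫ p, tfn p ∂π = stLearningCurve μ k η2 nT := by
    set e : Fin (nT + 1) → Fin (N + 1) :=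
      fun j => ⟨if (j : ℕ) < nT then (j : ℕ) else N, by split <;> omega⟩ with he
    have hinj : Function.Injective e := by
      intro j j' h
      have hv := congrArg Fin.val h
      simp only [he] at hv
      have hj := j.isLt
      have hj' := j'.isLt
      apply Fin.ext
      by_cases h1 : (j : ℕ) < nT <;> by_cases h2 : (j' : ℕ) < nT <;>
        simp only [h1, h2, if_true, if_false, ite_true, ite_false] at hv <;> omega
    have hmp := measurePreserving_comp_inj (E := E) μ hinj
    have hGmeas : Measurable fun y : Fin (nT + 1) → E =>
        stVar k η2 nT (fun i => y i.castSucc) (y (Fin.last nT)) :=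
      meas_stVar (X := Fin (nT + 1) → E) hk_meas η2 nT (fun i y => y i.castSucc) (fun y => y (Fin.last nT))
        (fun i => measurable_pi_apply _) (measurable_pi_apply _)
    have hcomp : ∀ p : Fin (N + 1) → E,
        stVar k η2 nT (fun i => (p ∘ e) i.castSucc) ((p ∘ e) (Fin.last nT)) = tfn p := by
      intro p
      have h1 : (fun i : Fin nT => (p ∘ e) i.castSucc)
          = fun i : Fin nT => p (Fin.castSucc (Fin.castAdd nS i)) := by
        funext i
        apply congrArg p
        apply Fin.ext
        simp [he, i.isLt]
      have h2 : (p ∘ e) (Fin.last nT) = p (Fin.last N) := by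
        apply congrArg p
        apply Fin.ext
        simp [he]
      rw [h1, h2]
    calc ∫ p, tfn p ∂π
        = ∫ p, stVar k η2 nT (fun i => (p ∘ e) i.castSucc) ((p ∘ e) (Fin.last nT)) ∂π := by
          congr 1
          funext p
          rw [hcomp p]
      _ = ∫ y, stVar k η2 nT (fun i => y i.castSucc) (y (Fin.last nT))
            ∂(Measure.pi fun _ : Fin (nT + 1) => μ) := by
          rw [← hmp.map_eq]
          rw [integral_map hmp.measurable.aemeasurable]
          rw [hmp.map_eq]
          exact hGmeas.aestronglyMeasurable
      _ = stLearningCurve μ k η2 nT := rfl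
  have : ρ^2 * stLearningCurve μ k η2 (nT + nS) + (1 - ρ^2) * stLearningCurve μ k η2 nT
      ≤ mtLearningCurve μ k η2 ρ nT nS := by
    have hmtc : ∫ p, mtfn p ∂π = mtLearningCurve μ k η2 ρ nT nS := rfl
    rw [← hmtc, ← hfull, ← htT]
    linarith [hmono, hsplit]
  exact this
end
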